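/- For every matrix A in SL₂±(ℝ) (i.e., det A = ±1), the hyperbolic distance in the upper half-plane from the associated Möbius transformation applied to i back to i satisfies d_{ℍ²}(Ã·i, i) = 2·log‖A‖₂, where ‖·‖₂ is the Euclidean operator norm. -/

import Mathlib

open Complex Matrix UpperHalfPlane

lemma im_moebius_aux (a b c d : ℝ) (z : ℂ) (hz : z.im ≠ 0) (hdet : a * d - b * c ≠ 0) :
    (((a : ℂ) * z + b) / ((c : ℂ) * z + d)).im
      = (a * d - b * c) * z.im / Complex.normSq ((c : ℂ) * z + d) := by
  have hden : ((c : ℂ) * z + d) ≠ 0 := by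
    intro h
    have him : c * z.im = 0 := by
      have := congrArg Complex.im h
      simpa using this
    have hc : c = 0 := by
      rcases mul_eq_zero.1 him with h' | h'
      · exact h'
      · exact absurd h' hz
    have hre : c * z.re + d = 0 := by
      have := congrArg Complex.re h
      simpa using this
    have hd : d = 0 := by simpa [hc] using hre
    exact hdet (by simp [hc, hd])
  rw [Complex.div_im]
  have hnsq : Complex.normSq ((c : ℂ) * z + d) ≠ 0 := by
    simpa [Complex.normSq_eq_zero] using hden
  rw [← sub_div]
  congr 1
  simp only [Complex.add_re, Complex.add_im, Complex.mul_re, Complex.mul_im,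
    Complex.ofReal_re, Complex.ofReal_im]
  ring

lemma im_moebius_pos (a b c d : ℝ) (z : ℂ) (hz : z.im ≠ 0)
    (hdet : 0 < (a * d - b * c) * z.im) :
    0 < (((a : ℂ) * z + b) / ((c : ℂ) * z + d)).im := by
  have hdet' : a * d - b * c ≠ 0 := by
    intro h; rw [h] at hdet; simp at hdet
  rw [im_moebius_aux a b c d z hz hdet']
  have hden : ((c : ℂ) * z + d) ≠ 0 := by
    intro h
    have him : c * z.im = 0 := by
      have := congrArg Complex.im h
      simpa using this
    have hc : c = 0 := by
      rcases mul_eq_zero.1 him with h' | h'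
      · exact h'
      · exact absurd h' hz
    have hre : c * z.re + d = 0 := by
      have := congrArg Complex.re h
      simpa using this
    have hd : d = 0 := by simpa [hc] using hre
    exact hdet' (by simp [hc, hd])
  have : 0 < Complex.normSq ((c : ℂ) * z + d) := Complex.normSq_pos.2 hden
  positivity

/-- The (anti-)Möbius action of a matrix with determinant `±1` on `ℂ`:
`z ↦ (az+b)/(cz+d)` if `det = 1`, and `z ↦ (az̄+b)/(cz̄+d)` otherwise. -/
noncomputable def moebiusMap (A : Matrix (Fin 2) (Fin 2) ℝ) (z : ℂ) : ℂ :=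
  if A.det = 1 then
    ((A 0 0 : ℂ) * z + A 0 1) / ((A 1 0 : ℂ) * z + A 1 1)
  else
    ((A 0 0 : ℂ) * (starRingEnd ℂ z) + A 0 1) / ((A 1 0 : ℂ) * (starRingEnd ℂ z) + A 1 1)

lemma moebiusMap_im_pos (A : Matrix (Fin 2) (Fin 2) ℝ)
    (hA : A.det = 1 ∨ A.det = -1) (z : ℍ) : 0 < (moebiusMap A (z : ℂ)).im := by
  have hdet2 : A.det = A 0 0 * A 1 1 - A 0 1 * A 1 0 := Matrix.det_fin_two A
  by_cases hd : A.det = 1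
  · rw [moebiusMap, if_pos hd]
    apply im_moebius_pos _ _ _ _ _ (ne_of_gt z.2)
    rw [← hdet2, hd]
    simpa using z.2
  · rw [moebiusMap, if_neg hd]
    have hdm : A.det = -1 := hA.resolve_left hd
    have hzc : ((starRingEnd ℂ) (z : ℂ)).im = -(z : ℂ).im := by simp
    apply im_moebius_pos
    · rw [hzc]; simpa using ne_of_gt z.2
    · rw [hzc, ← hdet2, hdm]; simpa using z.2

/-- The isometry of the hyperbolic plane `ℍ` induced by a matrix of
determinant `±1` (for other matrices we take the identity as junk value). -/
noncomputable def moebius (A : Matrix (Fin 2) (Fin 2) ℝ) (z : ℍ) : ℍ :=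
  if h : A.det = 1 ∨ A.det = -1 then ⟨moebiusMap A (z : ℂ), moebiusMap_im_pos A h z⟩
  else z

/-- The Euclidean operator norm of a `2 × 2` real matrix. -/
noncomputable def l2OpNorm (A : Matrix (Fin 2) (Fin 2) ℝ) : ℝ :=
  ‖Matrix.toEuclideanCLM (𝕜 := ℝ) A‖

/-- The spectral radius of a real matrix (computed over `ℂ`, so that complex
eigenvalues are taken into account). -/
noncomputable def specRad (A : Matrix (Fin 2) (Fin 2) ℝ) : ℝ :=
  (spectralRadius ℂ (A.map (algebraMap ℝ ℂ))).toReal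

/-- For `A ∈ SL₂±(ℝ)`, `d_{ℍ²}(Ã·i, i) = 2 log ‖A‖₂`. -/
lemma psd_aux (lp lr q x y : ℝ) (h1 : 0 ≤ lp) (h2 : 0 ≤ lr) (h3 : lp*lr = q^2) :
    0 ≤ lp*x^2 - 2*q*x*y + lr*y^2 := by
  rcases eq_or_lt_of_le h1 with h|h
  · have hq : q = 0 := by nlinarith
    simp [← h, hq]
    positivity
  · nlinarith [sq_nonneg (lp*x - q*y), mul_pos h h]

lemma key (a b c d : ℝ) (h : (a*d-b*c)^2 = 1) :
    ∃ lam : ℝ,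
      lam^2 - (a^2+b^2+c^2+d^2)*lam + 1 = 0 ∧ 1 ≤ lam ∧
      (∀ x y : ℝ, (a*x+b*y)^2 + (c*x+d*y)^2 ≤ lam*(x^2+y^2)) ∧
      (∃ x y : ℝ, x^2+y^2 ≠ 0 ∧ (a*x+b*y)^2 + (c*x+d*y)^2 = lam*(x^2+y^2)) := by
  obtain ⟨F, hF⟩ : ∃ F : ℝ, F = a^2+b^2+c^2+d^2 := ⟨_, rfl⟩
  rw [← hF]
  have hF2 : 2 ≤ F := by
    rw [hF]
    nlinarith [sq_nonneg (a-d), sq_nonneg (b+c), sq_nonneg (a+d), sq_nonneg (b-c),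
      sq_nonneg a, sq_nonneg b, sq_nonneg c, sq_nonneg d]
  have hFnn : (0:ℝ) ≤ F^2 - 4 := by nlinarith
  obtain ⟨s, hsdef⟩ : ∃ s : ℝ, s = Real.sqrt (F^2-4) := ⟨_, rfl⟩
  have hs0 : 0 ≤ s := hsdef ▸ Real.sqrt_nonneg _
  have hs : s^2 = F^2 - 4 := by rw [hsdef]; exact Real.sq_sqrt hFnn
  obtain ⟨lam, hlam⟩ : ∃ lam : ℝ, lam = (F + s)/2 := ⟨_, rfl⟩
  have hquad : lam^2 - F*lam + 1 = 0 := by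
    rw [hlam]; linear_combination hs/4
  have hlam1 : 1 ≤ lam := by rw [hlam]; linarith
  have hq2 : (lam - (a^2+c^2))*(lam - (b^2+d^2)) = (a*b+c*d)^2 := by
    linear_combination hquad + h + lam*hF
  have hdiff : ((a^2+c^2) - (b^2+d^2))^2 ≤ F^2 - 4 := by
    rw [hF]; nlinarith [h, sq_nonneg (a*b+c*d)]
  have habs : |(a^2+c^2) - (b^2+d^2)| ≤ s := by
    rw [hsdef]
    calc |(a^2+c^2) - (b^2+d^2)| = Real.sqrt (((a^2+c^2) - (b^2+d^2))^2) :=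
          (Real.sqrt_sq_eq_abs _).symm
      _ ≤ Real.sqrt (F^2-4) := Real.sqrt_le_sqrt hdiff
  have hd1 := le_abs_self ((a^2+c^2) - (b^2+d^2))
  have hd2 := neg_abs_le ((a^2+c^2) - (b^2+d^2))
  have hp : a^2+c^2 ≤ lam := by rw [hlam]; rw [hF] at *; linarith
  have hr : b^2+d^2 ≤ lam := by rw [hlam]; rw [hF] at *; linarith
  refine ⟨lam, hquad, hlam1, ?_, ?_⟩
  · intro x y
    have := psd_aux (lam - (a^2+c^2)) (lam - (b^2+d^2)) (a*b+c*d) x y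
      (by linarith) (by linarith) hq2
    nlinarith [this]
  · by_cases hq : a*b+c*d = 0
    · have h0 : (lam - (a^2+c^2))*(lam - (b^2+d^2)) = 0 := by rw [hq2, hq]; ring
      rcases mul_eq_zero.1 h0 with h'|h'
      · exact ⟨1, 0, by norm_num, by linear_combination (-1)*h'⟩
      · exact ⟨0, 1, by norm_num, by linear_combination (-1)*h'⟩
    · refine ⟨a*b+c*d, lam - (a^2+c^2), ?_, by linear_combination (-(lam - (a^2+c^2))) * hq2⟩
      intro h0
      have : (a*b+c*d)^2 = 0 := by nlinarith [sq_nonneg (lam - (a^2+c^2))]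
      exact hq (sq_eq_zero_iff.1 this)

lemma euclid_norm_sq (x : EuclideanSpace ℝ (Fin 2)) : ‖x‖^2 = x 0^2 + x 1^2 := by
  rw [EuclideanSpace.norm_eq, Real.sq_sqrt (by positivity)]
  simp [Fin.sum_univ_two, sq_abs]

lemma apply_coord (A : Matrix (Fin 2) (Fin 2) ℝ) (x : EuclideanSpace ℝ (Fin 2)) (i : Fin 2) :
    (Matrix.toEuclideanCLM (𝕜 := ℝ) A x) i = A i 0 * x 0 + A i 1 * x 1 := by
  show (A.mulVec x) i = _
  simp [Matrix.mulVec, dotProduct, Fin.sum_univ_two]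


lemma frac_eq (a b c d : ℝ) (h1 : a*d - b*c = 1) (hs : c^2 + d^2 ≠ 0) :
    ((a:ℂ)*Complex.I + b)/((c:ℂ)*Complex.I + d)
      = (((a*c+b*d)/(c^2+d^2) : ℝ) : ℂ) + ((1/(c^2+d^2) : ℝ) : ℂ) * Complex.I := by
  have hnorm : Complex.normSq ((c:ℂ)*Complex.I + d) = c^2+d^2 := by
    simp [Complex.normSq_apply]; ring
  apply Complex.ext
  · rw [Complex.div_re, hnorm]
    simp only [Complex.add_re, Complex.add_im, Complex.mul_re, Complex.mul_im,
      Complex.ofReal_re, Complex.ofReal_im, Complex.I_re, Complex.I_im]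
    field_simp; ring
  · rw [Complex.div_im, hnorm]
    simp only [Complex.add_re, Complex.add_im, Complex.mul_re, Complex.mul_im,
      Complex.ofReal_re, Complex.ofReal_im, Complex.I_re, Complex.I_im]
    field_simp; linear_combination h1

lemma frac_eq' (a b c d : ℝ) (h1 : a*d - b*c = -1) (hs : c^2 + d^2 ≠ 0) :
    ((a:ℂ)*(-Complex.I) + b)/((c:ℂ)*(-Complex.I) + d)
      = (((a*c+b*d)/(c^2+d^2) : ℝ) : ℂ) + ((1/(c^2+d^2) : ℝ) : ℂ) * Complex.I := by
  have hnorm : Complex.normSq ((c:ℂ)*(-Complex.I) + d) = c^2+d^2 := by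
    simp [Complex.normSq_apply]; ring
  apply Complex.ext
  · rw [Complex.div_re, hnorm]
    simp only [Complex.add_re, Complex.add_im, Complex.mul_re, Complex.mul_im,
      Complex.ofReal_re, Complex.ofReal_im, Complex.I_re, Complex.I_im,
      Complex.neg_re, Complex.neg_im]
    field_simp; ring
  · rw [Complex.div_im, hnorm]
    simp only [Complex.add_re, Complex.add_im, Complex.mul_re, Complex.mul_im,
      Complex.ofReal_re, Complex.ofReal_im, Complex.I_re, Complex.I_im,
      Complex.neg_re, Complex.neg_im]
    norm_num
    rw [div_sub_div_same, div_eq_iff hs]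
    field_simp
    linear_combination -h1

set_option maxHeartbeats 1000000

theorem stmt12 (A : Matrix (Fin 2) (Fin 2) ℝ) (hA : A.det = 1 ∨ A.det = -1) :
    dist (moebius A UpperHalfPlane.I) UpperHalfPlane.I = 2 * Real.log (l2OpNorm A) := by
  have hdet2 : A.det = A 0 0 * A 1 1 - A 0 1 * A 1 0 := Matrix.det_fin_two A
  have hdet : A 0 0 * A 1 1 - A 0 1 * A 1 0 = 1 ∨ A 0 0 * A 1 1 - A 0 1 * A 1 0 = -1 := by
    rw [← hdet2]; exact hA
  have h1 : (A 0 0 * A 1 1 - A 0 1 * A 1 0)^2 = 1 := by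
    rcases hdet with h|h <;> rw [h] <;> norm_num
  obtain ⟨lam, hquad, hlam1, hub, x, y, hxy0, hxy⟩ := key (A 0 0) (A 0 1) (A 1 0) (A 1 1) h1
  have hlam0 : (0:ℝ) < lam := by linarith
  rw [l2OpNorm]
  set N := ‖Matrix.toEuclideanCLM (𝕜 := ℝ) A‖ with hN
  have hNnn : 0 ≤ N := norm_nonneg _
  have hNle : N ≤ Real.sqrt lam := by
    apply ContinuousLinearMap.opNorm_le_bound _ (Real.sqrt_nonneg _)
    intro v
    have hv : ‖Matrix.toEuclideanCLM (𝕜 := ℝ) A v‖^2 ≤ lam * ‖v‖^2 := by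
      rw [euclid_norm_sq, euclid_norm_sq, apply_coord, apply_coord]
      exact hub (v 0) (v 1)
    calc ‖Matrix.toEuclideanCLM (𝕜 := ℝ) A v‖
        = Real.sqrt (‖Matrix.toEuclideanCLM (𝕜 := ℝ) A v‖^2) :=
          (Real.sqrt_sq (norm_nonneg _)).symm
      _ ≤ Real.sqrt (lam * ‖v‖^2) := Real.sqrt_le_sqrt hv
      _ = Real.sqrt lam * ‖v‖ := by
          rw [Real.sqrt_mul hlam0.le, Real.sqrt_sq (norm_nonneg _)]
  have hN2le : N^2 ≤ lam := by
    have h' : Real.sqrt lam ^ 2 = lam := Real.sq_sqrt hlam0.le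
    nlinarith [Real.sqrt_nonneg lam]
  have hlow : lam ≤ N^2 := by
    set v : EuclideanSpace ℝ (Fin 2) := (WithLp.equiv 2 (Fin 2 → ℝ)).symm ![x, y] with hv
    have hv0 : v 0 = x := rfl
    have hv1 : v 1 = y := rfl
    have himg : ‖Matrix.toEuclideanCLM (𝕜 := ℝ) A v‖^2 = lam * ‖v‖^2 := by
      rw [euclid_norm_sq, euclid_norm_sq, apply_coord, apply_coord, hv0, hv1]
      exact hxy
    have hle := ContinuousLinearMap.le_opNorm (Matrix.toEuclideanCLM (𝕜 := ℝ) A) v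
    have hvpos : 0 < ‖v‖^2 := by
      rcases (sq_nonneg ‖v‖).lt_or_eq with h'|h'
      · exact h'
      · exfalso; apply hxy0; rw [← hv0, ← hv1, ← euclid_norm_sq, ← h']
    nlinarith [norm_nonneg (Matrix.toEuclideanCLM (𝕜 := ℝ) A v), norm_nonneg v, hle, himg, hvpos]
  have hN2 : N^2 = lam := le_antisymm hN2le hlow
  have hN1 : 1 ≤ N := by nlinarith
  have hs2 : (0:ℝ) < (A 1 0)^2 + (A 1 1)^2 := by
    by_contra hc
    push_neg at hc
    nlinarith [sq_nonneg (A 0 0 * A 1 0 + A 0 1 * A 1 1), sq_nonneg (A 0 0), sq_nonneg (A 0 1),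
      sq_nonneg (A 1 0), sq_nonneg (A 1 1),
      mul_nonneg (add_nonneg (sq_nonneg (A 0 0)) (sq_nonneg (A 0 1))) (neg_nonneg.2 hc)]
  have hz : (moebius A UpperHalfPlane.I : ℂ)
      = (((A 0 0 * A 1 0 + A 0 1 * A 1 1)/((A 1 0)^2+(A 1 1)^2) : ℝ) : ℂ)
        + ((1/((A 1 0)^2+(A 1 1)^2) : ℝ) : ℂ) * Complex.I := by
    rw [moebius, dif_pos hA]
    show moebiusMap A (UpperHalfPlane.I : ℂ) = _
    rcases hA with hd | hd
    · rw [moebiusMap, if_pos hd, UpperHalfPlane.coe_I]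
      have h1' : A 0 0 * A 1 1 - A 0 1 * A 1 0 = 1 := by rw [← hdet2]; exact hd
      exact frac_eq _ _ _ _ h1' hs2.ne'
    · have hd1 : ¬ A.det = 1 := by rw [hd]; norm_num
      rw [moebiusMap, if_neg hd1, UpperHalfPlane.coe_I, Complex.conj_I]
      have h1' : A 0 0 * A 1 1 - A 0 1 * A 1 0 = -1 := by rw [← hdet2]; exact hd
      exact frac_eq' _ _ _ _ h1' hs2.ne'
  have hcosh1 : Real.cosh (dist (moebius A UpperHalfPlane.I) UpperHalfPlane.I)
      = ((A 0 0)^2 + (A 0 1)^2 + (A 1 0)^2 + (A 1 1)^2)/2 := by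
    rw [UpperHalfPlane.cosh_dist, Complex.dist_eq, Complex.sq_norm, UpperHalfPlane.coe_I,
      UpperHalfPlane.I_im, ← UpperHalfPlane.coe_im, hz]
    simp only [Complex.normSq_apply, Complex.sub_re, Complex.sub_im, Complex.add_re,
      Complex.add_im, Complex.mul_re, Complex.mul_im, Complex.ofReal_re, Complex.ofReal_im,
      Complex.I_re, Complex.I_im]
    field_simp
    ring_nf
    nlinarith [h1, hs2]
  have hcosh2 : Real.cosh (2 * Real.log N)
      = ((A 0 0)^2 + (A 0 1)^2 + (A 1 0)^2 + (A 1 1)^2)/2 := by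
    have hlog : (2:ℝ) * Real.log N = Real.log (N^2) := by
      rw [Real.log_pow]; norm_num
    rw [hlog, hN2, Real.cosh_eq, Real.exp_log hlam0, Real.exp_neg, Real.exp_log hlam0]
    field_simp
    linear_combination hquad
  have hd0 : dist (moebius A UpperHalfPlane.I) UpperHalfPlane.I ∈ Set.Ici (0:ℝ) := dist_nonneg
  have hl0 : 2 * Real.log N ∈ Set.Ici (0:ℝ) := by
    have := Real.log_nonneg hN1
    simp only [Set.mem_Ici]
    linarith
  exact Real.cosh_strictMonoOn.injOn hd0 hl0 (hcosh1.trans hcosh2.symm)
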